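/- arXiv:1508.02160 — 2 statements merged into one kernel-verified Lean document; each statement's English description precedes it below -/
import Mathlib

section
/- Let Y and Z be independent real random variables and g: R → R Lipschitz with constant L, with g(Y+Z) square integrable. Then Var(g(Y+Z) - E[g(Y+Z)|Y]) ≤ 2 L² Var(Z). -/
open MeasureTheory ProbabilityTheory

private lemma integrable_mul_of_memL2 {Ω : Type*} [MeasurableSpace Ω] {μ : Measure Ω}
    {f h : Ω → ℝ} (hf : MemLp f 2 μ) (hh : MemLp h 2 μ) :
    Integrable (fun ω => f ω * h ω) μ := by
  have hpqr : (1 : ENNReal) / 1 = 1 / 2 + 1 / 2 := by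
    rw [one_div, one_div, inv_one, ENNReal.inv_two_add_inv_two]
  have := MemLp.smul (r := 1) hh hf
  rw [← memLp_one_iff_integrable]
  simpa [Pi.smul_apply, smul_eq_mul, Pi.mul_def] using this

private lemma memL2_condexp {Ω : Type*} {m : MeasurableSpace Ω} [m0 : MeasurableSpace Ω]
    (hm : m ≤ m0) (μ : Measure Ω) [IsProbabilityMeasure μ]
    {f : Ω → ℝ} (hf : MemLp f 2 μ) : MemLp (μ[f|m]) 2 μ := by
  haveI : SigmaFinite (μ.trim hm) := inferInstance
  set fL : Lp ℝ 2 μ := hf.toLp f with hfL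
  have hcoe : MemLp ((condExpL2 ℝ ℝ hm fL : Lp ℝ 2 μ) : Ω → ℝ) 2 μ := Lp.memLp _
  have heq : ((condExpL2 ℝ ℝ hm fL : Lp ℝ 2 μ) : Ω → ℝ) =ᵐ[μ] μ[f|m] := by
    refine ae_eq_condExp_of_forall_setIntegral_eq hm (hf.integrable one_le_two)
      (fun s _ _ => (hcoe.integrable one_le_two).integrableOn)
      (fun s hs hμs => ?_) (aestronglyMeasurable_condExpL2 hm fL)
    rw [integral_condExpL2_eq hm fL hs hμs.ne]
    exact setIntegral_congr_ae (hm s hs) ((hf.coeFn_toLp).mono fun x hx _ => hx)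
  exact hcoe.ae_eq heq

/-- Main auxiliary estimate: if `h` is `m`-measurable and `‖W - h‖ ≤ ‖V‖` pointwise with
`V ∈ L²`, then `Var(W - E[W|m]) ≤ ∫ V²`. -/
private lemma variance_sub_condexp_le {Ω : Type*} {m : MeasurableSpace Ω}
    [m0 : MeasurableSpace Ω] (hm : m ≤ m0)
    (μ : Measure Ω) [IsProbabilityMeasure μ] (W h V : Ω → ℝ)
    (hW : MemLp W 2 μ) (hh_sm : StronglyMeasurable[m] h)
    (hV2 : MemLp V 2 μ)
    (hbound : ∀ ω, ‖W ω - h ω‖ ≤ ‖V ω‖) :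
    variance (W - μ[W|m]) μ ≤ ∫ ω, V ω * V ω ∂μ := by
  haveI : SigmaFinite (μ.trim hm) := inferInstance
  set D : Ω → ℝ := fun ω => W ω - h ω with hD_def
  have hh_meas : AEStronglyMeasurable h μ := (hh_sm.mono hm).aestronglyMeasurable
  have hD_meas : AEStronglyMeasurable D μ := hW.1.sub hh_meas
  have hD2 : MemLp D 2 μ :=
    MemLp.of_le hV2 hD_meas (Filter.Eventually.of_forall hbound)
  have hh2 : MemLp h 2 μ := by
    have : h = fun ω => W ω - D ω := by funext ω; simp [hD_def]
    rw [this]; exact hW.sub hD2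
  have hD_int : Integrable D μ := hD2.integrable one_le_two
  have hh_int : Integrable h μ := hh2.integrable one_le_two
  set E : Ω → ℝ := μ[D|m] with hE_def
  have hE2 : MemLp E 2 μ := memL2_condexp hm μ hD2
  have hE_int : Integrable E μ := hE2.integrable one_le_two
  -- the residual equals D - E a.e.
  have hX_ae : (W - μ[W|m]) =ᵐ[μ] fun ω => D ω - E ω := by
    have hWsum : W = fun ω => D ω + h ω := by funext ω; simp [hD_def]
    have h1 : μ[W|m] =ᵐ[μ] E + μ[h|m] := by
      nth_rewrite 1 [hWsum]
      exact condExp_add hD_int hh_int m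
    have h2 : μ[h|m] = h := condExp_of_stronglyMeasurable hm hh_sm hh_int
    filter_upwards [h1] with ω hω
    simp only [Pi.sub_apply, hω, Pi.add_apply, h2]
    simp only [hD_def]
    ring
  have hX_meas : AEStronglyMeasurable (W - μ[W|m]) μ :=
    hW.1.sub (stronglyMeasurable_condExp.mono hm).aestronglyMeasurable
  -- integrabilities of products
  have hDD_int : Integrable (fun ω => D ω * D ω) μ := integrable_mul_of_memL2 hD2 hD2
  have hED_int : Integrable (fun ω => E ω * D ω) μ := integrable_mul_of_memL2 hE2 hD2
  have hEE_int : Integrable (fun ω => E ω * E ω) μ := integrable_mul_of_memL2 hE2 hE2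
  have hVV_int : Integrable (fun ω => V ω * V ω) μ := integrable_mul_of_memL2 hV2 hV2
  -- tower property: ∫ E·D = ∫ E·E
  have htower : ∫ ω, E ω * D ω ∂μ = ∫ ω, E ω * E ω ∂μ := by
    have hmul : μ[(E * D)|m] =ᵐ[μ] E * μ[D|m] :=
      condExp_mul_of_stronglyMeasurable_left stronglyMeasurable_condExp hED_int hD_int
    calc ∫ ω, E ω * D ω ∂μ = ∫ ω, (E * D) ω ∂μ := rfl
      _ = ∫ ω, (μ[(E * D)|m]) ω ∂μ := (integral_condExp hm).symm
      _ = ∫ ω, (E * μ[D|m]) ω ∂μ := integral_congr_ae hmul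
      _ = ∫ ω, E ω * E ω ∂μ := rfl
  have step1 : variance (W - μ[W|m]) μ ≤ ∫ ω, ((W - μ[W|m]) ^ 2) ω ∂μ :=
    variance_le_expectation_sq hX_meas
  have step2 : ∫ ω, ((W - μ[W|m]) ^ 2) ω ∂μ = ∫ ω, (D ω - E ω)^2 ∂μ := by
    refine integral_congr_ae ?_
    filter_upwards [hX_ae] with ω hω
    simp only [Pi.pow_apply, hω]
  have step3 : ∫ ω, (D ω - E ω)^2 ∂μ ≤ ∫ ω, D ω * D ω ∂μ := by
    have hexp : ∫ ω, (D ω - E ω)^2 ∂μ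
        = ∫ ω, D ω * D ω ∂μ - 2 * ∫ ω, E ω * D ω ∂μ + ∫ ω, E ω * E ω ∂μ := by
      have hfun : (fun ω => (D ω - E ω)^2)
          = fun ω => (D ω * D ω - 2 * (E ω * D ω)) + E ω * E ω := by
        funext ω; ring
      have h2int : Integrable (fun ω => 2 * (E ω * D ω)) μ := hED_int.const_mul 2
      have hsub_int : Integrable (fun ω => D ω * D ω - 2 * (E ω * D ω)) μ :=
        hDD_int.sub h2int
      rw [hfun, integral_add hsub_int hEE_int, integral_sub hDD_int h2int,
        integral_const_mul]
    rw [hexp, htower]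
    have hEEnn : 0 ≤ ∫ ω, E ω * E ω ∂μ := integral_nonneg fun ω => mul_self_nonneg _
    linarith
  have step4 : ∫ ω, D ω * D ω ∂μ ≤ ∫ ω, V ω * V ω ∂μ := by
    refine integral_mono hDD_int hVV_int fun ω => ?_
    have h1 := hbound ω
    rw [Real.norm_eq_abs, Real.norm_eq_abs] at h1
    calc D ω * D ω = |D ω| * |D ω| := (abs_mul_abs_self _).symm
      _ ≤ |V ω| * |V ω| := mul_le_mul h1 h1 (abs_nonneg _) (abs_nonneg _)
      _ = V ω * V ω := abs_mul_abs_self _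
  calc variance (W - μ[W|m]) μ ≤ ∫ ω, ((W - μ[W|m]) ^ 2) ω ∂μ := step1
    _ = ∫ ω, (D ω - E ω)^2 ∂μ := step2
    _ ≤ ∫ ω, D ω * D ω ∂μ := step3
    _ ≤ ∫ ω, V ω * V ω ∂μ := step4

/-- If `Y, Z` are independent, `g` is `L`-Lipschitz and `g(Y+Z)` is square integrable,
then `Var(g(Y+Z) - E[g(Y+Z)|Y]) ≤ 2 L² Var(Z)`. -/
theorem variance_residual_le_lipschitz
    {Ω : Type*} [MeasurableSpace Ω] (μ : Measure Ω) [IsProbabilityMeasure μ]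
    (Y Z : Ω → ℝ) (hY : Measurable Y) (hZ : Measurable Z)
    (hindep : IndepFun Y Z μ) (hZ2 : MemLp Z 2 μ)
    (g : ℝ → ℝ) (L : ℝ) (hg : ∀ x y : ℝ, |g x - g y| ≤ L * |x - y|)
    (hW : MemLp (fun ω => g (Y ω + Z ω)) 2 μ) :
    variance ((fun ω => g (Y ω + Z ω))
        - μ[(fun ω => g (Y ω + Z ω)) | MeasurableSpace.comap Y inferInstance]) μ
      ≤ 2 * L^2 * variance Z μ := by
  have hL0 : 0 ≤ L := by
    have h01 := hg 0 1
    have h02 := abs_nonneg (g 0 - g 1)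
    simp only [zero_sub, abs_neg, abs_one, mul_one] at h01
    linarith
  have hgL : LipschitzWith L.toNNReal g := by
    refine LipschitzWith.of_dist_le_mul fun x y => ?_
    rw [Real.dist_eq, Real.dist_eq]
    calc |g x - g y| ≤ L * |x - y| := hg x y
      _ ≤ L.toNNReal * |x - y| :=
          mul_le_mul_of_nonneg_right (Real.le_coe_toNNReal L) (abs_nonneg _)
  have hgM : Measurable g := hgL.continuous.measurable
  set c : ℝ := ∫ ω, Z ω ∂μ with hc_def
  have hm : MeasurableSpace.comap Y inferInstance ≤ ‹MeasurableSpace Ω› := hY.comap_le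
  have hYm : Measurable[MeasurableSpace.comap Y inferInstance] Y :=
    measurable_iff_comap_le.mpr le_rfl
  have hh_sm : StronglyMeasurable[MeasurableSpace.comap Y inferInstance]
      (fun ω => g (Y ω + c)) :=
    ((hgM.comp (measurable_add_const c)).comp hYm).stronglyMeasurable
  have hZc2 : MemLp (fun ω => L * (Z ω - c)) 2 μ :=
    (hZ2.sub (memLp_const c)).const_mul L
  have hbound : ∀ ω, ‖g (Y ω + Z ω) - g (Y ω + c)‖ ≤ ‖L * (Z ω - c)‖ := by
    intro ω
    rw [Real.norm_eq_abs, Real.norm_eq_abs, abs_mul, abs_of_nonneg hL0]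
    calc |g (Y ω + Z ω) - g (Y ω + c)| ≤ L * |(Y ω + Z ω) - (Y ω + c)| := hg _ _
      _ = L * |Z ω - c| := by ring_nf
  have key := variance_sub_condexp_le hm μ (fun ω => g (Y ω + Z ω))
    (fun ω => g (Y ω + c)) (fun ω => L * (Z ω - c)) hW hh_sm hZc2 hbound
  refine key.trans ?_
  have hint : ∫ ω, L * (Z ω - c) * (L * (Z ω - c)) ∂μ = L^2 * variance Z μ := by
    rw [variance_eq_integral hZ.aemeasurable, ← integral_const_mul]
    refine integral_congr_ae (Filter.Eventually.of_forall fun ω => ?_)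
    simp only [Pi.pow_apply, Pi.sub_apply, ← hc_def]
    ring
  beta_reduce
  rw [hint]
  nlinarith [variance_nonneg Z μ, sq_nonneg L]
end

section
/- Let Y, Z be independent real random variables, g: R → R Lipschitz with constant L, and f(U X) = g(Y + Z) square-integrable. Then Var(g(Y+Z)) - Var(E[g(Y+Z)|Y]) ≤ 2 L² Var(Z). -/
open MeasureTheory ProbabilityTheory

section Aux

variable {Ω : Type*} {m m0 : MeasurableSpace Ω} {μ : Measure Ω}

private lemma aux_int_mul [IsProbabilityMeasure μ] {f g : Ω → ℝ}
    (hf : MemLp f 2 μ) (hg : MemLp g 2 μ) :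
    Integrable (fun ω => f ω * g ω) μ := by
  have h : MemLp (f • g) 1 μ := hg.smul hf (hpqr := ENNReal.holderConjugate_iff.mpr ENNReal.inv_two_add_inv_two)
  exact memLp_one_iff_integrable.mp h

private lemma aux_memLp2_condexp [IsProbabilityMeasure μ] (hm : m ≤ m0) {f : Ω → ℝ}
    (hf : MemLp f 2 μ) : MemLp (μ[f|m]) 2 μ := by
  haveI : SigmaFinite (μ.trim hm) := inferInstance
  have heq : (condExpL2 ℝ ℝ hm (hf.toLp f) : Ω → ℝ) =ᵐ[μ] μ[f|m] := by
    refine ae_eq_condExp_of_forall_setIntegral_eq hm (hf.integrable one_le_two)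
      (fun s _ _ => (integrable_condExpL2_of_isFiniteMeasure hm).integrableOn)
      (fun s hs hμs => ?_) ?_
    · rw [integral_condExpL2_eq hm _ hs hμs.ne]
      exact setIntegral_congr_ae (hm s hs) (hf.coeFn_toLp.mono fun x hx _ => hx)
    · exact lpMeas.aestronglyMeasurable _
  exact (Lp.memLp ((condExpL2 ℝ ℝ hm (hf.toLp f) : lpMeas ℝ ℝ m 2 μ) : Lp ℝ 2 μ)).ae_eq heq

/-- Orthogonality: multiplying by an `m`-measurable `L²` function commutes with condexp
under the integral. -/
private lemma aux_integral_mul_condexp [IsProbabilityMeasure μ] (hm : m ≤ m0) {f W : Ω → ℝ}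
    (hfm : StronglyMeasurable[m] f) (hf : MemLp f 2 μ) (hW : MemLp W 2 μ) :
    ∫ ω, f ω * W ω ∂μ = ∫ ω, f ω * (μ[W|m]) ω ∂μ := by
  haveI : SigmaFinite (μ.trim hm) := inferInstance
  have hfW : Integrable (f * W) μ := aux_int_mul hf hW
  have h1 : ∫ ω, (f * W) ω ∂μ = ∫ ω, (μ[f * W|m]) ω ∂μ := (integral_condExp hm).symm
  have h2 : μ[f * W|m] =ᵐ[μ] f * μ[W|m] :=
    condExp_mul_of_stronglyMeasurable_left hfm hfW (hW.integrable one_le_two)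
  calc ∫ ω, f ω * W ω ∂μ = ∫ ω, (μ[f * W|m]) ω ∂μ := h1
    _ = ∫ ω, (f * μ[W|m]) ω ∂μ := integral_congr_ae h2
    _ = ∫ ω, f ω * (μ[W|m]) ω ∂μ := rfl

end Aux

/-- If `Y, Z` are independent, `g` is `L`-Lipschitz and `g(Y+Z)` is square integrable,
then `Var(g(Y+Z)) - Var(E[g(Y+Z)|Y]) ≤ 2 L² Var(Z)`. -/
theorem variance_minus_condexp_variance_le
    {Ω : Type*} [MeasurableSpace Ω] (μ : Measure Ω) [IsProbabilityMeasure μ]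
    (Y Z : Ω → ℝ) (hY : Measurable Y) (hZ : Measurable Z)
    (hindep : IndepFun Y Z μ) (hZ2 : MemLp Z 2 μ)
    (g : ℝ → ℝ) (L : ℝ) (hg : ∀ x y : ℝ, |g x - g y| ≤ L * |x - y|)
    (hW : MemLp (fun ω => g (Y ω + Z ω)) 2 μ) :
    variance (fun ω => g (Y ω + Z ω)) μ
        - variance (μ[(fun ω => g (Y ω + Z ω)) | MeasurableSpace.comap Y inferInstance]) μ
      ≤ 2 * L^2 * variance Z μ := by
  set W : Ω → ℝ := fun ω => g (Y ω + Z ω) with hWdef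
  set m : MeasurableSpace Ω := MeasurableSpace.comap Y inferInstance with hmdef
  have hm : m ≤ _ := hY.comap_le
  haveI : SigmaFinite (μ.trim hm) := inferInstance
  set CE : Ω → ℝ := μ[W|m] with hCEdef
  have hCE2 : MemLp CE 2 μ := aux_memLp2_condexp hm hW
  -- L is nonneg, g is continuous
  have hL0 : 0 ≤ L := by
    have h := hg 0 1
    rw [show |(0:ℝ) - 1| = 1 by norm_num, mul_one] at h
    exact le_trans (abs_nonneg _) h
  have hgc : Continuous g := by
    have : LipschitzWith L.toNNReal g := by
      refine LipschitzWith.of_dist_le_mul fun x y => ?_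
      rw [Real.dist_eq, Real.dist_eq, Real.coe_toNNReal L hL0]
      exact hg x y
    exact this.continuous
  set EZ : ℝ := ∫ ω, Z ω ∂μ with hEZdef
  set c : Ω → ℝ := fun ω => g (Y ω + EZ) with hcdef
  have hYm : Measurable[m] Y := measurable_iff_comap_le.mpr le_rfl
  have hcm : StronglyMeasurable[m] c :=
    (hgc.measurable.comp (hYm.add_const EZ)).stronglyMeasurable
  -- pointwise bound |W - c| ≤ L * |Z - EZ|
  have hpt : ∀ ω, |W ω - c ω| ≤ L * |Z ω - EZ| := by
    intro ω
    calc |W ω - c ω| = |g (Y ω + Z ω) - g (Y ω + EZ)| := rfl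
      _ ≤ L * |(Y ω + Z ω) - (Y ω + EZ)| := hg _ _
      _ = L * |Z ω - EZ| := by ring_nf
  have hZE2 : MemLp (fun ω => Z ω - EZ) 2 μ := hZ2.sub (memLp_const EZ)
  have hc2 : MemLp c 2 μ := by
    have hBig : MemLp (fun ω => L * (Z ω - EZ)) 2 μ := hZE2.const_mul L
    have hdiff : MemLp (fun ω => c ω - W ω) 2 μ := by
      refine MemLp.of_le hBig
        ((hcm.mono hm).aestronglyMeasurable.sub hW.aestronglyMeasurable)
        (ae_of_all _ fun ω => ?_)
      rw [Real.norm_eq_abs, Real.norm_eq_abs, abs_mul, abs_of_nonneg hL0, abs_sub_comm]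
      exact hpt ω
    have := hW.add hdiff
    have heq : (fun ω => W ω + (c ω - W ω)) = c := by funext ω; ring
    rwa [← heq]
  -- integrability of products
  have hWW := aux_int_mul hW hW
  have hCECE := aux_int_mul hCE2 hCE2
  have hCEW := aux_int_mul hCE2 hW
  have hWCmem : MemLp (fun ω => W ω - CE ω) 2 μ := hW.sub hCE2
  have hCEc : MemLp (fun ω => CE ω - c ω) 2 μ := hCE2.sub hc2
  have hWc : MemLp (fun ω => W ω - c ω) 2 μ := hW.sub hc2
  -- means agree
  have hmean : ∫ ω, CE ω ∂μ = ∫ ω, W ω ∂μ := integral_condExp hm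
  -- key cancellation: ∫ CE·W = ∫ CE·CE
  have hCEWeq : ∫ ω, CE ω * W ω ∂μ = ∫ ω, CE ω * CE ω ∂μ :=
    aux_integral_mul_condexp hm stronglyMeasurable_condExp hCE2 hW
  -- Step A : Var W - Var CE = ∫ (W - CE)²
  have hA : variance W μ - variance CE μ = ∫ ω, (W ω - CE ω)^2 ∂μ := by
    rw [variance_eq_sub hW, variance_eq_sub hCE2, hmean]
    have hexp : (fun ω => (W ω - CE ω)^2)
        = fun ω => (W ω * W ω - 2 * (CE ω * W ω)) + CE ω * CE ω := by
      funext ω; ring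
    have hint2 : Integrable (fun ω => 2 * (CE ω * W ω)) μ := hCEW.const_mul 2
    have hint1 : Integrable (fun ω => W ω * W ω - 2 * (CE ω * W ω)) μ := hWW.sub hint2
    rw [hexp, integral_add hint1 hCECE, integral_sub hWW hint2, integral_const_mul, hCEWeq]
    have h1 : ∫ ω, (W ^ 2) ω ∂μ = ∫ ω, W ω * W ω ∂μ := by
      refine integral_congr_ae (ae_of_all _ fun ω => ?_); simp [pow_two]
    have h2 : ∫ ω, (CE ^ 2) ω ∂μ = ∫ ω, CE ω * CE ω ∂μ := by
      refine integral_congr_ae (ae_of_all _ fun ω => ?_); simp [pow_two]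
    rw [h1, h2]; ring
  -- Step B : ∫ (W - CE)² ≤ ∫ (W - c)²
  have hcross : ∫ ω, (CE ω - c ω) * W ω ∂μ = ∫ ω, (CE ω - c ω) * CE ω ∂μ :=
    aux_integral_mul_condexp hm (stronglyMeasurable_condExp.sub hcm) hCEc hW
  have hB : ∫ ω, (W ω - CE ω)^2 ∂μ ≤ ∫ ω, (W ω - c ω)^2 ∂μ := by
    have hint1 := aux_int_mul hWCmem hWCmem
    have hint2 := aux_int_mul hCEc hCEc
    have hint3 := aux_int_mul hCEc hWCmem
    have hexp : (fun ω => (W ω - c ω)^2)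
        = fun ω => ((W ω - CE ω) * (W ω - CE ω) + (CE ω - c ω) * (CE ω - c ω))
            + 2 * ((CE ω - c ω) * (W ω - CE ω)) := by
      funext ω; ring
    have hcross0 : ∫ ω, (CE ω - c ω) * (W ω - CE ω) ∂μ = 0 := by
      have hexp2 : (fun ω => (CE ω - c ω) * (W ω - CE ω))
          = fun ω => (CE ω - c ω) * W ω - (CE ω - c ω) * CE ω := by funext ω; ring
      rw [hexp2, integral_sub (aux_int_mul hCEc hW) (aux_int_mul hCEc hCE2), hcross,
        sub_self]
    have h1 : ∫ ω, (W ω - CE ω)^2 ∂μ = ∫ ω, (W ω - CE ω) * (W ω - CE ω) ∂μ := by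
      refine integral_congr_ae (ae_of_all _ fun ω => ?_); ring
    have h2 : ∫ ω, (CE ω - c ω)^2 ∂μ = ∫ ω, (CE ω - c ω) * (CE ω - c ω) ∂μ := by
      refine integral_congr_ae (ae_of_all _ fun ω => ?_); ring
    have h2nonneg : 0 ≤ ∫ ω, (CE ω - c ω)^2 ∂μ :=
      integral_nonneg fun ω => sq_nonneg _
    have hint4 : Integrable (fun ω => 2 * ((CE ω - c ω) * (W ω - CE ω))) μ :=
      hint3.const_mul 2
    have hint5 : Integrable (fun ω => (W ω - CE ω) * (W ω - CE ω)
        + (CE ω - c ω) * (CE ω - c ω)) μ := hint1.add hint2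
    rw [hexp, integral_add hint5 hint4, integral_add hint1 hint2,
      integral_const_mul, hcross0]
    rw [h1] ; rw [h2] at h2nonneg ; linarith
  -- Step C : ∫ (W - c)² ≤ L² Var Z
  have hvz : variance Z μ = ∫ ω, (Z ω - EZ)^2 ∂μ := by
    rw [variance_eq_integral hZ2.aemeasurable]
  have hC : ∫ ω, (W ω - c ω)^2 ∂μ ≤ L^2 * variance Z μ := by
    rw [hvz, ← integral_const_mul]
    refine integral_mono (by simpa [pow_two] using aux_int_mul hWc hWc)
      ((hZE2.integrable_sq).const_mul _) fun ω => ?_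
    have h1 := hpt ω
    have h2 : (W ω - c ω)^2 ≤ (L * |Z ω - EZ|)^2 := by
      rw [← sq_abs (W ω - c ω)]
      exact pow_le_pow_left₀ (abs_nonneg _) h1 2
    calc (W ω - c ω)^2 ≤ (L * |Z ω - EZ|)^2 := h2
      _ = L^2 * (Z ω - EZ)^2 := by rw [mul_pow, sq_abs]
  have hfin : 0 ≤ L^2 * variance Z μ :=
    mul_nonneg (sq_nonneg L) (variance_nonneg Z μ)
  linarith [hA, hB, hC]
end
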